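/- Let G be a weighted digraph with no negative cycles, and let C, D ⊆ V. Suppose H ⊆ V and a family of paths {π'_{s,t}} ⊆ G − D satisfy: (a) δ_{G−D}(s,t) ≤ ℓ(π'_{s,t}) ≤ δ^h_{G−(C∪D)}(s,t) for all s,t; (b) whenever |V(π'_{s,t})| ≥ h, H intersects V(π'_{s,t}). If a, b ∈ V are such that every shortest a→b path in G has more than h hops and avoids C ∪ D, then some shortest a→b path in G passes through a vertex of H. -/

import Mathlib

/-- A walk in a digraph with edge relation `E`, from `s` to `t`, given as its
(nonempty) list of vertices. -/
def IsWalk {V : Type*} (E : V → V → Prop) (s t : V) (P : List V) : Prop :=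
  P ≠ [] ∧ P.head? = some s ∧ P.getLast? = some t ∧ P.Chain' E

/-- The length (total weight) of a walk given by its vertex list. -/
noncomputable def pathLen {V : Type*} (w : V → V → ℝ) (P : List V) : ℝ :=
  ((P.zip P.tail).map fun e => w e.1 e.2).sum

/-- `distK E w k s t` : minimum length of an `s → t` walk with at most `k` hops (edges);
`⊤` if no such walk exists. -/
noncomputable def distK {V : Type*} (E : V → V → Prop) (w : V → V → ℝ) (k : ℕ)
    (s t : V) : EReal :=
  sInf {x : EReal | ∃ P : List V, IsWalk E s t P ∧ P.length ≤ k + 1 ∧ x = (pathLen w P : EReal)}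

/-- `dist' E w s t` : the `s,t`-distance, the infimum of lengths of all `s → t` walks. -/
noncomputable def dist' {V : Type*} (E : V → V → Prop) (w : V → V → ℝ) (s t : V) : EReal :=
  sInf {x : EReal | ∃ P : List V, IsWalk E s t P ∧ x = (pathLen w P : EReal)}

/-- `G` has a negative-weight cycle (a nontrivial closed walk of negative total weight). -/
def HasNegCycle {V : Type*} (E : V → V → Prop) (w : V → V → ℝ) : Prop :=
  ∃ v : V, ∃ P : List V, IsWalk E v v P ∧ 2 ≤ P.length ∧ pathLen w P < 0

/-- `G − S` : remove all edges incident to vertices of `S`. -/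
def delV {V : Type*} (E : V → V → Prop) (S : Set V) : V → V → Prop :=
  fun u v => E u v ∧ u ∉ S ∧ v ∉ S

/-- A digraph is acyclic if its only closed walks are the trivial one-vertex walks. -/
def Acyclic' {V : Type*} (E : V → V → Prop) : Prop :=
  ∀ v : V, ∀ P : List V, IsWalk E v v P → P.length = 1

section Aux
variable {V : Type*}

theorem pathLen_cons_cons (w : V → V → ℝ) (x y : V) (l : List V) :
    pathLen w (x :: y :: l) = w x y + pathLen w (y :: l) := by
  simp [pathLen]

theorem pathLen_append (w : V → V → ℝ) :
    ∀ (A B : List V) (c : V), A.getLast? = some c → B.head? = some c →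
    pathLen w (A ++ B.tail) = pathLen w A + pathLen w B
  | [], B, c, hA, hB => by simp at hA
  | [x], B, c, hA, hB => by
      cases B with
      | nil => simp at hB
      | cons b bs =>
        simp only [List.getLast?_singleton, Option.some_inj] at hA
        simp only [List.head?_cons, Option.some_inj] at hB
        subst hA; subst hB
        simp [pathLen]
  | x :: y :: rest, B, c, hA, hB => by
      have ih := pathLen_append w (y :: rest) B c (by simpa using hA) hB
      simp only [List.cons_append] at ih ⊢
      rw [pathLen_cons_cons, pathLen_cons_cons]
      rw [ih]; ring

theorem pathLen_append' (w : V → V → ℝ) (A B : List V) (x : V) :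
    pathLen w (A ++ x :: B) = pathLen w (A ++ [x]) + pathLen w (x :: B) := by
  have := pathLen_append w (A ++ [x]) (x :: B) x (by simp) (by simp)
  simpa using this

/-- Concatenate two walks sharing endpoint `c`. -/
theorem IsWalk.append {E : V → V → Prop} {w : V → V → ℝ} {s c t : V} {A B : List V}
    (h1 : IsWalk E s c A) (h2 : IsWalk E c t B) :
    IsWalk E s t (A ++ B.tail) ∧ pathLen w (A ++ B.tail) = pathLen w A + pathLen w B := by
  obtain ⟨hA0, hAh, hAl, hAc⟩ := h1
  obtain ⟨hB0, hBh, hBl, hBc⟩ := h2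
  obtain ⟨Bt, rfl⟩ : ∃ Bt, B = c :: Bt := by
    cases B with
    | nil => exact absurd rfl hB0
    | cons b0 Bt =>
      simp only [List.head?_cons, Option.some_inj] at hBh
      exact ⟨Bt, by rw [hBh]⟩
  refine ⟨⟨?_, ?_, ?_, ?_⟩, pathLen_append w A (c :: Bt) c hAl rfl⟩
  · simp [hA0]
  · rw [List.head?_append_of_ne_nil _ hA0]; exact hAh
  · rcases Bt with _ | ⟨b1, Bt'⟩
    · have : c = t := by simpa using hBl
      simpa [this] using hAl
    · simp only [List.tail_cons]
      rw [List.getLast?_append]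
      simp only [List.getLast?_cons_cons] at hBl
      rw [hBl]; rfl
  · unfold List.Chain' at hBc ⊢; rw [List.isChain_append]
    rw [List.isChain_cons] at hBc
    refine ⟨hAc, hBc.2, ?_⟩
    intro x hx y hy
    rw [hAl] at hx; simp at hx; subst hx
    exact hBc.1 y hy

theorem split_of_pair_sublist {a : V} :
    ∀ {l : List V}, [a, a].Sublist l → ∃ l1 l2 l3, l = l1 ++ a :: (l2 ++ a :: l3) := by
  intro l h
  induction l with
  | nil => simp at h
  | cons x l ih =>
    rcases h with _ | h' | h'
    case cons h' =>
      obtain ⟨l1, l2, l3, rfl⟩ := ih h'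
      exact ⟨x :: l1, l2, l3, rfl⟩
    case cons.cons_cons h' =>
      have ha : a ∈ l := h'.subset (by simp)
      obtain ⟨l2, l3, rfl⟩ := List.append_of_mem ha
      exact ⟨[], l2, l3, rfl⟩

/-- Splice out a cycle from a walk. -/
theorem walk_splice {E' : V → V → Prop} (w : V → V → ℝ) {s t x : V} {A B Bc : List V}
    (hw : IsWalk E' s t (A ++ x :: (B ++ x :: Bc))) :
    IsWalk E' s t (A ++ x :: Bc) ∧ IsWalk E' x x (x :: (B ++ [x])) ∧
    pathLen w (A ++ x :: (B ++ x :: Bc))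
      = pathLen w (A ++ x :: Bc) + pathLen w (x :: (B ++ [x])) := by
  obtain ⟨h0, hh, hl, hc⟩ := hw
  have hcyc2 : (x :: (B ++ x :: Bc)) = (x :: B) ++ (x :: Bc) := by simp
  unfold List.Chain' at hc; rw [List.isChain_append] at hc
  obtain ⟨hcA, hcR, hlink⟩ := hc
  rw [hcyc2, List.isChain_append] at hcR
  obtain ⟨hcxB, hcxBc, hlink2⟩ := hcR
  constructor
  · refine ⟨by simp, ?_, ?_, ?_⟩
    · rcases A with _ | ⟨a0, A'⟩
      · simpa using hh
      · simpa using hh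
    · rw [List.getLast?_append] at hl ⊢
      rw [hcyc2, List.getLast?_append] at hl
      rcases Bc with _ | ⟨b, Bc'⟩
      · simpa using hl
      · simpa using hl
    · unfold List.Chain'; rw [List.isChain_append]
      refine ⟨hcA, hcxBc, ?_⟩
      intro u hu y hy
      simp only [List.head?_cons, Option.mem_def, Option.some_inj] at hy
      subst hy
      exact hlink u hu x (by simp)
  constructor
  · refine ⟨by simp, by simp, ?_, ?_⟩
    · rw [show x :: (B ++ [x]) = (x :: B) ++ [x] from by simp, List.getLast?_append]; rfl
    have : x :: (B ++ [x]) = (x :: B) ++ [x] := by simp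
    unfold List.Chain'; rw [this, List.isChain_append]
    exact ⟨hcxB, List.isChain_singleton x,
      fun u hu y hy => by
        simp only [List.head?_cons, Option.mem_def, Option.some_inj] at hy
        subst hy; exact hlink2 u hu x (by simp)⟩
  · rw [pathLen_append' w A (B ++ x :: Bc) x, pathLen_append' w A Bc x]
    have : (x :: (B ++ x :: Bc)) = (x :: B) ++ x :: Bc := by simp
    rw [this, pathLen_append' w (x :: B) Bc x]
    have : (x :: (B ++ [x])) = (x :: B) ++ [x] := by simp
    rw [this]
    ring

theorem pathLen_nonneg_of_closed {E E' : V → V → Prop} {w : V → V → ℝ}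
    (hE : ∀ u v, E' u v → E u v) (hneg : ¬ HasNegCycle E w)
    {x : V} {P : List V} (hw : IsWalk E' x x P) (hlen : 2 ≤ P.length) :
    0 ≤ pathLen w P := by
  by_contra hlt
  push_neg at hlt
  exact hneg ⟨x, P, ⟨hw.1, hw.2.1, hw.2.2.1, hw.2.2.2.imp hE⟩, hlen, hlt⟩

/-- Cycle-removal: every walk can be replaced by a nodup walk that is no longer. -/
theorem exists_nodup_walk {E E' : V → V → Prop} {w : V → V → ℝ}
    (hE : ∀ u v, E' u v → E u v) (hneg : ¬ HasNegCycle E w) :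
    ∀ (n : ℕ) (P : List V) (s t : V), P.length ≤ n → IsWalk E' s t P →
    ∃ P' : List V, IsWalk E' s t P' ∧ P'.Nodup ∧ pathLen w P' ≤ pathLen w P ∧
      ∀ v ∈ P', v ∈ P := by
  intro n
  induction n with
  | zero => intro P s t hn hw; exact absurd (List.length_eq_zero_iff.mp (Nat.le_zero.mp hn)) hw.1
  | succ n ih =>
    intro P s t hn hw
    by_cases hnd : P.Nodup
    · exact ⟨P, hw, hnd, le_refl _, fun v hv => hv⟩
    · rw [List.nodup_iff_sublist] at hnd
      push_neg at hnd
      obtain ⟨x, hx⟩ := hnd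
      obtain ⟨l1, l2, l3, rfl⟩ := split_of_pair_sublist hx
      obtain ⟨hw1, hwc, hsum⟩ := walk_splice w hw
      have hnn : 0 ≤ pathLen w (x :: (l2 ++ [x])) :=
        pathLen_nonneg_of_closed hE hneg hwc (by simp)
      have hlen' : (l1 ++ x :: l3).length ≤ n := by
        simp only [List.length_append, List.length_cons] at hn ⊢; omega
      obtain ⟨P', hP'w, hP'nd, hP'len, hP'sub⟩ := ih (l1 ++ x :: l3) s t hlen' hw1
      refine ⟨P', hP'w, hP'nd, ?_, ?_⟩
      · calc pathLen w P' ≤ pathLen w (l1 ++ x :: l3) := hP'len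
          _ ≤ _ := by rw [hsum]; linarith
      · intro v hv
        have := hP'sub v hv
        simp only [List.mem_append, List.mem_cons] at this ⊢
        tauto

theorem chain'_delV {E : V → V → Prop} {S : Set V} :
    ∀ {P : List V}, P.Chain' E → (∀ v ∈ P, v ∉ S) → P.Chain' (delV E S)
  | [], _, _ => List.isChain_nil
  | [x], _, _ => List.isChain_singleton x
  | x :: y :: l, hc, hS => by
    unfold List.Chain' at hc ⊢; rw [List.isChain_cons_cons] at hc ⊢
    exact ⟨⟨hc.1, hS x (by simp), hS y (by simp)⟩,
      chain'_delV hc.2 (fun v hv => hS v (by simp [hv]))⟩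

theorem walk_split {E : V → V → Prop} {s t : V} {Q : List V} (hw : IsWalk E s t Q)
    (k : ℕ) (hk : k < Q.length) :
    IsWalk E s (Q.get ⟨k, hk⟩) (Q.take (k+1)) ∧ IsWalk E (Q.get ⟨k, hk⟩) t (Q.drop k) ∧
      Q = Q.take (k+1) ++ (Q.drop k).tail := by
  obtain ⟨h0, hh, hl, hc⟩ := hw
  have hkQ : Q[k]? = some (Q.get ⟨k, hk⟩) := List.getElem?_eq_getElem hk
  have hQlen : 0 < Q.length := by omega
  have hdecomp : Q = Q.take (k+1) ++ (Q.drop k).tail := by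
    rw [List.tail_drop, List.take_append_drop]
  refine ⟨⟨?_, ?_, ?_, hc.take _⟩, ⟨?_, ?_, ?_, hc.drop _⟩, hdecomp⟩
  · simp only [ne_eq, List.take_eq_nil_iff]
    push_neg
    exact ⟨by omega, fun hQ => by simp [hQ] at hk⟩
  · rw [List.head?_eq_getElem?, List.getElem?_take, if_pos (by omega),
      ← List.head?_eq_getElem?, hh]
  · rw [List.getLast?_eq_getElem?, List.length_take,
      show (k+1) ⊓ Q.length - 1 = k from by omega, List.getElem?_take, if_pos (by omega), hkQ]
  · simp only [ne_eq, List.drop_eq_nil_iff]; omega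
  · rw [List.head?_eq_getElem?, List.getElem?_drop, Nat.add_zero, hkQ]
  · rw [List.getLast?_eq_getElem?, List.getElem?_drop, List.length_drop,
      show k + (Q.length - k - 1) = Q.length - 1 from by omega,
      ← List.getLast?_eq_getElem?, hl]

end Aux

/-- Let `G` be a finite weighted digraph with no negative cycles,
`C, D ⊆ V`, and suppose `H ⊆ V` and a family of paths `π'_{s,t} ⊆ G − D` satisfy:
(a) `δ_{G−D}(s,t) ≤ ℓ(π'_{s,t}) ≤ δ^h_{G−(C∪D)}(s,t)` for all `s,t` (whenever the
right-hand side is finite, in which case `π'_{s,t}` is a genuine `s → t` walk in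
`G − D`), and (b) whenever `π'_{s,t}` has at least `h` distinct vertices, `H`
intersects it. If every shortest `a → b` path in `G` has more than `h` hops and
avoids `C ∪ D` (and some shortest `a → b` path exists), then some shortest `a → b`
path in `G` passes through a vertex of `H`. -/
theorem stmt11 {V : Type*} [Fintype V] [DecidableEq V]
    (E : V → V → Prop) (w : V → V → ℝ) (hneg : ¬ HasNegCycle E w)
    (C D : Set V) (h : ℕ) (H : Set V) (π' : V → V → List V)
    (hvalid : ∀ s t, distK (delV E (C ∪ D)) w h s t ≠ ⊤ →
      IsWalk (delV E D) s t (π' s t))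
    (ha : ∀ s t, distK (delV E (C ∪ D)) w h s t ≠ ⊤ →
      dist' (delV E D) w s t ≤ (pathLen w (π' s t) : EReal) ∧
      (pathLen w (π' s t) : EReal) ≤ distK (delV E (C ∪ D)) w h s t)
    (hb : ∀ s t, distK (delV E (C ∪ D)) w h s t ≠ ⊤ →
      h ≤ (π' s t).toFinset.card → ∃ x ∈ H, x ∈ π' s t)
    (a b : V)
    (hex : ∃ P : List V, IsWalk E a b P ∧ (pathLen w P : EReal) = dist' E w a b)
    (hab : ∀ P : List V, IsWalk E a b P → (pathLen w P : EReal) = dist' E w a b →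
      h + 1 < P.length ∧ ∀ v ∈ P, v ∉ C ∪ D) :
    ∃ P : List V, IsWalk E a b P ∧ (pathLen w P : EReal) = dist' E w a b ∧
      ∃ x ∈ H, x ∈ P := by
  classical
  obtain ⟨Q0, hQ0w, hQ0s⟩ := hex
  have hTne : Q0.length ∈ {n | ∃ P : List V, IsWalk E a b P ∧
      (pathLen w P : EReal) = dist' E w a b ∧ P.length = n} := ⟨Q0, hQ0w, hQ0s, rfl⟩
  obtain ⟨Q, hQw, hQs, hQlen⟩ := Nat.sInf_mem ⟨_, hTne⟩
  have hQmin : ∀ P : List V, IsWalk E a b P → (pathLen w P : EReal) = dist' E w a b →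
      Q.length ≤ P.length := fun P h1 h2 => hQlen ▸ Nat.sInf_le ⟨P, h1, h2, rfl⟩
  obtain ⟨hQhop, hQavoid⟩ := hab Q hQw hQs
  have hhlt : h < Q.length := by omega
  obtain ⟨hR, hS, hdecomp⟩ := walk_split hQw h hhlt
  set c := Q.get ⟨h, hhlt⟩ with hc
  set R := Q.take (h+1) with hRdef
  set S := Q.drop h with hSdef
  have hsplit : pathLen w Q = pathLen w R + pathLen w S := by
    conv_lhs => rw [hdecomp]
    exact pathLen_append w R S c hR.2.2.1 hS.2.1
  have hRsub : ∀ v ∈ R, v ∈ Q := fun v hv => (List.take_sublist _ _).subset hv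
  have hRdel : IsWalk (delV E (C ∪ D)) a c R :=
    ⟨hR.1, hR.2.1, hR.2.2.1, chain'_delV hR.2.2.2 (fun v hv => hQavoid v (hRsub v hv))⟩
  have hRlen : R.length ≤ h + 1 := by
    rw [hRdef, List.length_take]; exact min_le_left _ _
  have hdistK_le : distK (delV E (C ∪ D)) w h a c ≤ (pathLen w R : EReal) :=
    sInf_le ⟨R, hRdel, hRlen, rfl⟩
  have hne : distK (delV E (C ∪ D)) w h a c ≠ ⊤ :=
    ne_top_of_le_ne_top (EReal.coe_ne_top _) hdistK_le
  have hπw : IsWalk (delV E D) a c (π' a c) := hvalid a c hne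
  have hπleR : pathLen w (π' a c) ≤ pathLen w R := by
    exact_mod_cast le_trans (ha a c hne).2 hdistK_le
  have hdelD : ∀ u v, delV E D u v → E u v := fun u v hv => hv.1
  have hπE : IsWalk E a c (π' a c) := ⟨hπw.1, hπw.2.1, hπw.2.2.1, hπw.2.2.2.imp hdelD⟩
  have key : ∀ A : List V, IsWalk E a c A → pathLen w A ≤ pathLen w R →
      IsWalk E a b (A ++ S.tail) ∧ (pathLen w (A ++ S.tail) : EReal) = dist' E w a b ∧
      (A ++ S.tail).length = A.length + S.tail.length := by
    intro A hAw hAle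
    obtain ⟨hw', hplen⟩ := IsWalk.append (w := w) hAw hS
    refine ⟨hw', ?_, by simp⟩
    have h1 : dist' E w a b ≤ (pathLen w (A ++ S.tail) : EReal) := sInf_le ⟨_, hw', rfl⟩
    have h2 : pathLen w (A ++ S.tail) ≤ pathLen w Q := by rw [hplen, hsplit]; linarith
    have h2' : (pathLen w (A ++ S.tail) : EReal) ≤ dist' E w a b := by
      rw [← hQs]; exact_mod_cast h2
    exact le_antisymm h2' h1
  obtain ⟨hP1w, hP1s, _⟩ := key (π' a c) hπE hπleR
  have hRfull : R.length = h + 1 := by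
    rw [hRdef, List.length_take]; omega
  have hQL : Q.length = (h + 1) + S.tail.length := by
    conv_lhs => rw [hdecomp]
    rw [List.length_append, hRfull]
  have hcard : h ≤ (π' a c).toFinset.card := by
    by_contra hcard
    push_neg at hcard
    obtain ⟨π₂, hπ₂w, hπ₂nd, hπ₂len, hπ₂sub⟩ :=
      exists_nodup_walk hdelD hneg (π' a c).length (π' a c) a c le_rfl hπw
    have hπ₂E : IsWalk E a c π₂ := ⟨hπ₂w.1, hπ₂w.2.1, hπ₂w.2.2.1, hπ₂w.2.2.2.imp hdelD⟩
    obtain ⟨hw2, hs2, hlen2⟩ := key π₂ hπ₂E (le_trans hπ₂len hπleR)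
    have hmin := hQmin _ hw2 hs2
    have h1 : π₂.length = π₂.toFinset.card := (List.toFinset_card_of_nodup hπ₂nd).symm
    have h2 : π₂.toFinset ⊆ (π' a c).toFinset := by
      intro v hv
      rw [List.mem_toFinset] at hv ⊢
      exact hπ₂sub v hv
    have h3 : π₂.length < h := by
      rw [h1]; exact lt_of_le_of_lt (Finset.card_le_card h2) hcard
    rw [hlen2] at hmin
    omega
  obtain ⟨x, hxH, hxπ⟩ := hb a c hne hcard
  exact ⟨π' a c ++ S.tail, hP1w, hP1s, x, hxH, List.mem_append_left _ hxπ⟩
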